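/- Let q > 0, v > 0, r > 0, f ≥ 0 be real numbers with Δ ≥ (1+r)·√(1+f). Then ∫₀^{Δ²−1} 2·q·v·f·min{1+r, ((1+r)/r)·max{0, √((1+δ)/(1+f)) − 1}} · (1/(2Δ·√(1+δ))) dδ = q·v·f·(1+r)·(2Δ − (r+2)·√(1+f))/Δ; that is, the expected fee revenue of a liquidity provider with endowment q equals q·𝓛(f), where 𝓛(f) = v·f·(1+r)·(2Δ − (r+2)·√(1+f))/Δ is the liquidity yield. -/

import Mathlib

open Set MeasureTheory

set_option maxHeartbeats 1600000 in
/-- Expected fee revenue: integrating the fee revenue from a private value shock `δ`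
against the shock density `φ(δ) = 1/(2Δ·√(1+δ))` on `[0, Δ²−1]` yields `q·𝓛(f)`, where
`𝓛(f) = v·f·(1+r)·(2Δ − (r+2)·√(1+f))/Δ` is the liquidity yield. -/
theorem expected_fee_revenue
    (q v r f Δ : ℝ) (hq : 0 < q) (hv : 0 < v) (hr : 0 < r) (hf : 0 ≤ f)
    (hΔ : (1 + r) * Real.sqrt (1 + f) ≤ Δ) :
    ∫ δ in (0 : ℝ)..(Δ ^ 2 - 1),
        2 * q * v * f * min (1 + r) ((1 + r) / r * max 0 (Real.sqrt ((1 + δ) / (1 + f)) - 1)) *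
          (1 / (2 * Δ * Real.sqrt (1 + δ))) =
      q * (v * f * (1 + r) * (2 * Δ - (r + 2) * Real.sqrt (1 + f)) / Δ) := by
  have hf1 : (0:ℝ) < 1 + f := by linarith
  obtain ⟨s, hs_def⟩ : ∃ s : ℝ, s = Real.sqrt (1 + f) := ⟨_, rfl⟩
  rw [← hs_def] at hΔ ⊢
  have hs2 : s ^ 2 = 1 + f := by rw [hs_def]; exact Real.sq_sqrt hf1.le
  have hs1 : 1 ≤ s := by rw [hs_def]; exact Real.one_le_sqrt.mpr (by linarith)
  have hs0 : (0:ℝ) < s := by linarith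
  have hΔ0 : (0:ℝ) < Δ := lt_of_lt_of_le (by nlinarith) hΔ
  obtain ⟨c, hc_def⟩ : ∃ c : ℝ, c = (1 + r) ^ 2 * (1 + f) - 1 := ⟨_, rfl⟩
  obtain ⟨d, hd_def⟩ : ∃ d : ℝ, d = Δ ^ 2 - 1 := ⟨_, rfl⟩
  rw [show Δ ^ 2 - 1 = d from hd_def.symm]
  have hfc : f ≤ c := by
    rw [hc_def]
    nlinarith [mul_nonneg (by nlinarith : (0:ℝ) ≤ 2 * r + r ^ 2) hf1.le]
  have hcd : c ≤ d := by
    rw [hc_def, hd_def]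
    nlinarith [mul_le_mul hΔ hΔ (by positivity) hΔ0.le]
  have h0d : (0:ℝ) ≤ d := le_trans (le_trans hf hfc) hcd
  -- derivative of sqrt (1 + ·)
  have hderiv : ∀ x : ℝ, 0 ≤ x →
      HasDerivAt (fun y => Real.sqrt (1 + y)) (1 / (2 * Real.sqrt (1 + x))) x := by
    intro x hx
    have h1 : HasDerivAt (fun y : ℝ => 1 + y) 1 x := by
      simpa using (hasDerivAt_id x).const_add 1
    have h2 := (Real.hasDerivAt_sqrt (by positivity : (1:ℝ) + x ≠ 0)).comp x h1
    exact h2.congr_deriv (by ring)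
  have hsqrt1 : ∀ x : ℝ, 0 ≤ x → 1 ≤ Real.sqrt (1 + x) := by
    intro x hx; exact Real.one_le_sqrt.mpr (by linarith)
  -- integrability of the integrand on subintervals of [0, d]
  have hcont1 : Continuous (fun δ : ℝ =>
      2 * q * v * f * min (1 + r) ((1 + r) / r * max 0 (Real.sqrt ((1 + δ) / (1 + f)) - 1))) := by
    apply continuous_const.mul
    apply Continuous.min continuous_const
    apply continuous_const.mul
    apply Continuous.max continuous_const
    exact (Real.continuous_sqrt.comp (by continuity)).sub continuous_const
  have hint : ∀ a b : ℝ, 0 ≤ a → a ≤ b →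
      IntervalIntegrable (fun δ =>
        2 * q * v * f * min (1 + r) ((1 + r) / r * max 0 (Real.sqrt ((1 + δ) / (1 + f)) - 1)) *
          (1 / (2 * Δ * Real.sqrt (1 + δ)))) volume a b := by
    intro a b ha hab
    apply ContinuousOn.intervalIntegrable
    apply ContinuousOn.mul hcont1.continuousOn
    apply ContinuousOn.div continuousOn_const
    · exact (continuous_const.mul (Real.continuous_sqrt.comp (by continuity))).continuousOn
    · intro x hx
      rw [Set.uIcc_of_le hab] at hx
      have hx0 : (0:ℝ) < 1 + x := by linarith [hx.1]
      positivity
  -- Piece 1 : zero on [0, f]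
  have P1 : (∫ δ in (0:ℝ)..f,
      2 * q * v * f * min (1 + r) ((1 + r) / r * max 0 (Real.sqrt ((1 + δ) / (1 + f)) - 1)) *
        (1 / (2 * Δ * Real.sqrt (1 + δ)))) = 0 := by
    have key : Set.EqOn (fun δ =>
        2 * q * v * f * min (1 + r) ((1 + r) / r * max 0 (Real.sqrt ((1 + δ) / (1 + f)) - 1)) *
          (1 / (2 * Δ * Real.sqrt (1 + δ)))) (fun _ => (0:ℝ)) (Set.uIcc 0 f) := by
      intro δ hδ
      rw [Set.uIcc_of_le hf] at hδ
      have h1 : Real.sqrt ((1 + δ) / (1 + f)) ≤ 1 := by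
        apply Real.sqrt_le_one.mpr
        rw [div_le_one hf1]; linarith [hδ.2]
      have h2 : max 0 (Real.sqrt ((1 + δ) / (1 + f)) - 1) = 0 := max_eq_left (by linarith)
      simp only [h2, mul_zero]
      rw [min_eq_right (by linarith : (0:ℝ) ≤ 1 + r)]
      ring
    rw [intervalIntegral.integral_congr key, intervalIntegral.integral_zero]
  -- Piece 2 : [f, c]
  have P2 : (∫ δ in f..c,
      2 * q * v * f * min (1 + r) ((1 + r) / r * max 0 (Real.sqrt ((1 + δ) / (1 + f)) - 1)) *
        (1 / (2 * Δ * Real.sqrt (1 + δ)))) = q * v * f * (1 + r) * r * s / Δ := by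
    have key : Set.EqOn (fun δ =>
        2 * q * v * f * min (1 + r) ((1 + r) / r * max 0 (Real.sqrt ((1 + δ) / (1 + f)) - 1)) *
          (1 / (2 * Δ * Real.sqrt (1 + δ))))
        (fun δ => q * v * f * (1 + r) / (r * Δ) * (1 / s - 1 / Real.sqrt (1 + δ)))
        (Set.uIcc f c) := by
      intro δ hδ
      rw [Set.uIcc_of_le hfc] at hδ
      obtain ⟨h1, h2⟩ := hδ
      have hδ0 : (0:ℝ) ≤ δ := le_trans hf h1
      have ht2 : Real.sqrt (1 + δ) ^ 2 = 1 + δ := Real.sq_sqrt (by linarith)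
      have ht1 : 1 ≤ Real.sqrt (1 + δ) := hsqrt1 δ hδ0
      have hts : s ≤ Real.sqrt (1 + δ) := by
        rw [hs_def]; exact Real.sqrt_le_sqrt (by linarith)
      have htub : Real.sqrt (1 + δ) ≤ (1 + r) * s := by
        rw [show (1 + r) * s = Real.sqrt (((1 + r) * s) ^ 2) from
          (Real.sqrt_sq (by positivity)).symm]
        apply Real.sqrt_le_sqrt
        nlinarith [hc_def]
      have hsq : Real.sqrt ((1 + δ) / (1 + f)) = Real.sqrt (1 + δ) / s := by
        rw [hs_def, Real.sqrt_div (by linarith : (0:ℝ) ≤ 1 + δ)]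
      have hmax : max 0 (Real.sqrt (1 + δ) / s - 1) = Real.sqrt (1 + δ) / s - 1 := by
        apply max_eq_right
        rw [sub_nonneg, le_div_iff₀ hs0]; linarith
      have hmin : min (1 + r) ((1 + r) / r * (Real.sqrt (1 + δ) / s - 1))
          = (1 + r) / r * (Real.sqrt (1 + δ) / s - 1) := by
        apply min_eq_right
        have hle : Real.sqrt (1 + δ) / s - 1 ≤ r := by
          rw [sub_le_iff_le_add, div_le_iff₀ hs0]; nlinarith
        rw [div_mul_eq_mul_div, div_le_iff₀ hr]
        nlinarith
      simp only [hsq, hmax, hmin]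
      have ht0 : Real.sqrt (1 + δ) ≠ 0 := by linarith
      field_simp
    rw [intervalIntegral.integral_congr key]
    have hFTC := intervalIntegral.integral_eq_sub_of_hasDerivAt (a := f) (b := c)
      (f := fun δ => q * v * f * (1 + r) / (r * Δ) * (δ / s - 2 * Real.sqrt (1 + δ)))
      (f' := fun δ => q * v * f * (1 + r) / (r * Δ) * (1 / s - 1 / Real.sqrt (1 + δ)))
      (by
        intro x hx
        rw [Set.uIcc_of_le hfc] at hx
        have hx0 : (0:ℝ) ≤ x := le_trans hf hx.1
        have ht1 : 1 ≤ Real.sqrt (1 + x) := hsqrt1 x hx0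
        have ha := (hasDerivAt_id x).div_const s
        have hb := (hderiv x hx0).const_mul 2
        have hab := ha.sub hb
        have heq : 1 / s - 2 * (1 / (2 * Real.sqrt (1 + x))) = 1 / s - 1 / Real.sqrt (1 + x) := by
          have hne : Real.sqrt (1 + x) ≠ 0 := by linarith
          field_simp
        rw [heq] at hab
        exact hab.const_mul _)
      (by
        apply ContinuousOn.intervalIntegrable
        apply continuousOn_const.mul
        apply continuousOn_const.sub
        apply ContinuousOn.div continuousOn_const
        · exact (Real.continuous_sqrt.comp (by continuity)).continuousOn
        · intro x hx
          rw [Set.uIcc_of_le hfc] at hx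
          have hx0 : (0:ℝ) < 1 + x := by linarith [hx.1]
          positivity)
    rw [hFTC]
    have h1c : Real.sqrt (1 + c) = (1 + r) * s := by
      rw [hc_def, show 1 + ((1 + r) ^ 2 * (1 + f) - 1) = ((1 + r) * s) ^ 2 by nlinarith]
      exact Real.sqrt_sq (by positivity)
    simp only [h1c, show Real.sqrt (1 + f) = s from hs_def.symm]
    have hfs : f = s ^ 2 - 1 := by linarith
    rw [hc_def, hfs]
    field_simp
    ring
  -- Piece 3 : [c, d]
  have P3 : (∫ δ in c..d,
      2 * q * v * f * min (1 + r) ((1 + r) / r * max 0 (Real.sqrt ((1 + δ) / (1 + f)) - 1)) *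
        (1 / (2 * Δ * Real.sqrt (1 + δ)))) = 2 * q * v * f * (1 + r) * (Δ - (1 + r) * s) / Δ := by
    have key : Set.EqOn (fun δ =>
        2 * q * v * f * min (1 + r) ((1 + r) / r * max 0 (Real.sqrt ((1 + δ) / (1 + f)) - 1)) *
          (1 / (2 * Δ * Real.sqrt (1 + δ))))
        (fun δ => q * v * f * (1 + r) / Δ * (1 / Real.sqrt (1 + δ)))
        (Set.uIcc c d) := by
      intro δ hδ
      rw [Set.uIcc_of_le hcd] at hδ
      obtain ⟨h1, h2⟩ := hδ
      have hδ0 : (0:ℝ) ≤ δ := le_trans (le_trans hf hfc) h1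
      have ht2 : Real.sqrt (1 + δ) ^ 2 = 1 + δ := Real.sq_sqrt (by linarith)
      have ht1 : 1 ≤ Real.sqrt (1 + δ) := hsqrt1 δ hδ0
      have htlb : (1 + r) * s ≤ Real.sqrt (1 + δ) := by
        rw [show (1 + r) * s = Real.sqrt (((1 + r) * s) ^ 2) from
          (Real.sqrt_sq (by positivity)).symm]
        apply Real.sqrt_le_sqrt
        nlinarith [hc_def]
      have hsq : Real.sqrt ((1 + δ) / (1 + f)) = Real.sqrt (1 + δ) / s := by
        rw [hs_def, Real.sqrt_div (by linarith : (0:ℝ) ≤ 1 + δ)]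
      have hmax : max 0 (Real.sqrt (1 + δ) / s - 1) = Real.sqrt (1 + δ) / s - 1 := by
        apply max_eq_right
        rw [sub_nonneg, le_div_iff₀ hs0]; nlinarith
      have hmin : min (1 + r) ((1 + r) / r * (Real.sqrt (1 + δ) / s - 1)) = 1 + r := by
        apply min_eq_left
        have hge : r ≤ Real.sqrt (1 + δ) / s - 1 := by
          rw [le_sub_iff_add_le, le_div_iff₀ hs0]; nlinarith
        rw [div_mul_eq_mul_div, le_div_iff₀ hr]
        nlinarith
      simp only [hsq, hmax, hmin]
      have ht0 : Real.sqrt (1 + δ) ≠ 0 := by linarith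
      field_simp
    rw [intervalIntegral.integral_congr key]
    have hFTC := intervalIntegral.integral_eq_sub_of_hasDerivAt (a := c) (b := d)
      (f := fun δ => q * v * f * (1 + r) / Δ * (2 * Real.sqrt (1 + δ)))
      (f' := fun δ => q * v * f * (1 + r) / Δ * (1 / Real.sqrt (1 + δ)))
      (by
        intro x hx
        rw [Set.uIcc_of_le hcd] at hx
        have hx0 : (0:ℝ) ≤ x := le_trans (le_trans hf hfc) hx.1
        have ht1 : 1 ≤ Real.sqrt (1 + x) := hsqrt1 x hx0
        have hb := (hderiv x hx0).const_mul 2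
        have heq : 2 * (1 / (2 * Real.sqrt (1 + x))) = 1 / Real.sqrt (1 + x) := by
          have hne : Real.sqrt (1 + x) ≠ 0 := by linarith
          field_simp
        rw [heq] at hb
        exact hb.const_mul _)
      (by
        apply ContinuousOn.intervalIntegrable
        apply continuousOn_const.mul
        apply ContinuousOn.div continuousOn_const
        · exact (Real.continuous_sqrt.comp (by continuity)).continuousOn
        · intro x hx
          rw [Set.uIcc_of_le hcd] at hx
          have hx0 : (0:ℝ) < 1 + x := by linarith [le_trans (le_trans hf hfc) hx.1]
          positivity)
    rw [hFTC]
    have h1c : Real.sqrt (1 + c) = (1 + r) * s := by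
      rw [hc_def, show 1 + ((1 + r) ^ 2 * (1 + f) - 1) = ((1 + r) * s) ^ 2 by nlinarith]
      exact Real.sqrt_sq (by positivity)
    have h1d : Real.sqrt (1 + d) = Δ := by
      rw [hd_def, show 1 + (Δ ^ 2 - 1) = Δ ^ 2 by ring]
      exact Real.sqrt_sq hΔ0.le
    simp only [h1c, h1d]
    field_simp
  rw [← intervalIntegral.integral_add_adjacent_intervals (hint 0 f le_rfl hf)
      (hint f d hf (le_trans hfc hcd)),
    ← intervalIntegral.integral_add_adjacent_intervals (hint f c hf hfc)
      (hint c d (le_trans hf hfc) hcd), P1, P2, P3]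
  field_simp
  ring
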